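/- Let F_n (n ∈ ℕ) be linear functionals on the real vector space of dynamic functions on I, each 𝒯-sequentially continuous, and suppose that for every dynamic test function φ the real sequence (F_n(φ)) converges. Then for every sequence of dynamic test functions φ_n converging to 0 in 𝒯, one has F_n(φ_n) → 0 as n → ∞. -/

import Mathlib

open Set Filter Topology MeasureTheory

noncomputable section

/-- `J = [-1/2, 1/2]`. -/
def Jset : Set ℝ := Set.Icc (-(1:ℝ)/2) (1/2)

/-- A dynamic function `f` on `I = (a,b)` tends to `c` from the right at `τ`
(uniformly in `s ∈ J`). -/
def RightLim (a b : ℝ) (f : ℝ → ℝ → ℝ) (τ c : ℝ) : Prop :=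
  ∀ ε > 0, ∃ η > 0, ∀ t ∈ Set.Ioo a b, t ∈ Set.Ioo τ (τ + η) → ∀ s ∈ Jset, |f t s - c| < ε

/-- A dynamic function `f` on `I = (a,b)` tends to `c` from the left at `τ`
(uniformly in `s ∈ J`). -/
def LeftLim (a b : ℝ) (f : ℝ → ℝ → ℝ) (τ c : ℝ) : Prop :=
  ∀ ε > 0, ∃ η > 0, ∀ t ∈ Set.Ioo a b, t ∈ Set.Ioo (τ - η) τ → ∀ s ∈ Jset, |f t s - c| < ε

/-- `f` is bounded on `I × J`. -/
def BddOn (a b : ℝ) (f : ℝ → ℝ → ℝ) : Prop :=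
  ∃ M, ∀ t ∈ Set.Ioo a b, ∀ s ∈ Jset, |f t s| ≤ M

/-- The one-sided uniform limits of `f` exist at every point of `I = (a,b)`. -/
def HasSidedLimits (a b : ℝ) (f : ℝ → ℝ → ℝ) : Prop :=
  ∀ τ ∈ Set.Ioo a b, (∃ c, RightLim a b f τ c) ∧ (∃ c, LeftLim a b f τ c)

/-- The support of the dynamic function `f` is contained in the compact
interval `[c,d] ⊂ (a,b)`. -/
def SuppIn (a b : ℝ) (f : ℝ → ℝ → ℝ) (c d : ℝ) : Prop :=
  a < c ∧ c ≤ d ∧ d < b ∧ ∀ t ∉ Set.Icc c d, ∀ s ∈ Jset, f t s = 0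

/-- `φ` is a dynamic test function on `I = (a,b)`. -/
def IsDynTest (a b : ℝ) (φ : ℝ → ℝ → ℝ) : Prop :=
  BddOn a b φ ∧ HasSidedLimits a b φ ∧ ∃ c d, SuppIn a b φ c d

/-- Convergence of a sequence of dynamic test functions in the space `𝒯`:
common compact support in `I` and uniform convergence on `I × J`. -/
def TendstoT (a b : ℝ) (φn : ℕ → ℝ → ℝ → ℝ) (φ : ℝ → ℝ → ℝ) : Prop :=
  (∃ c d, a < c ∧ c ≤ d ∧ d < b ∧ ∀ n, ∀ t ∉ Set.Icc c d, ∀ s ∈ Jset, φn n t s = 0) ∧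
  ∀ ε > 0, ∃ N, ∀ n ≥ N, ∀ t ∈ Set.Ioo a b, ∀ s ∈ Jset, |φn n t s - φ t s| < ε

/-- A functional on dynamic functions is `𝒯`-sequentially continuous. -/
def SeqContT (a b : ℝ) (F : (ℝ → ℝ → ℝ) → ℝ) : Prop :=
  ∀ (φn : ℕ → ℝ → ℝ → ℝ) (φ : ℝ → ℝ → ℝ),
    (∀ n, IsDynTest a b (φn n)) → IsDynTest a b φ → TendstoT a b φn φ →
      Filter.Tendsto (fun n => F (φn n)) Filter.atTop (nhds (F φ))

namespace Stmt8

lemma zero_mem_Jset : (0:ℝ) ∈ Jset := by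
  rw [Jset, Set.mem_Icc]; norm_num

/-- Generic one-sided limit notion. -/
def GLim (a b : ℝ) (Q : ℝ → ℝ → Prop) (f : ℝ → ℝ → ℝ) (c : ℝ) : Prop :=
  ∀ ε > 0, ∃ η > 0, ∀ t ∈ Set.Ioo a b, Q η t → ∀ s ∈ Jset, |f t s - c| < ε

def QMono (Q : ℝ → ℝ → Prop) : Prop := ∀ η₁ η₂ t, η₁ ≤ η₂ → Q η₁ t → Q η₂ t

def QNe (a b : ℝ) (Q : ℝ → ℝ → Prop) : Prop := ∀ η > 0, ∃ t ∈ Set.Ioo a b, Q η t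

variable {a b c d : ℝ} {Q : ℝ → ℝ → Prop}

lemma rightLim_iff_glim {f : ℝ → ℝ → ℝ} {τ c : ℝ} :
    RightLim a b f τ c ↔ GLim a b (fun η t => t ∈ Set.Ioo τ (τ + η)) f c := Iff.rfl

lemma leftLim_iff_glim {f : ℝ → ℝ → ℝ} {τ c : ℝ} :
    LeftLim a b f τ c ↔ GLim a b (fun η t => t ∈ Set.Ioo (τ - η) τ) f c := Iff.rfl

lemma qmono_right (τ : ℝ) : QMono (fun η t => t ∈ Set.Ioo τ (τ + η)) := by
  intro η₁ η₂ t h ht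
  exact ⟨ht.1, lt_of_lt_of_le ht.2 (by linarith)⟩

lemma qmono_left (τ : ℝ) : QMono (fun η t => t ∈ Set.Ioo (τ - η) τ) := by
  intro η₁ η₂ t h ht
  exact ⟨lt_of_le_of_lt (by linarith) ht.1, ht.2⟩

lemma qne_right {τ : ℝ} (hτ : τ ∈ Set.Ioo a b) :
    QNe a b (fun η t => t ∈ Set.Ioo τ (τ + η)) := by
  intro η hη
  have hm : 0 < min η (b - τ) := lt_min hη (by linarith [hτ.2])
  have h1 := min_le_left η (b - τ)
  have h2 := min_le_right η (b - τ)
  refine ⟨τ + min η (b - τ) / 2, ⟨?_, ?_⟩, ?_, ?_⟩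
  · linarith [hτ.1]
  · linarith
  · linarith
  · linarith

lemma qne_left {τ : ℝ} (hτ : τ ∈ Set.Ioo a b) :
    QNe a b (fun η t => t ∈ Set.Ioo (τ - η) τ) := by
  intro η hη
  have hm : 0 < min η (τ - a) := lt_min hη (by linarith [hτ.1])
  have h1 := min_le_left η (τ - a)
  have h2 := min_le_right η (τ - a)
  refine ⟨τ - min η (τ - a) / 2, ⟨?_, ?_⟩, ?_, ?_⟩
  · linarith
  · linarith [hτ.2]
  · linarith
  · linarith

lemma glim_congr {f g : ℝ → ℝ → ℝ} {c : ℝ}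
    (h : ∀ t ∈ Set.Ioo a b, ∀ s ∈ Jset, f t s = g t s) (hf : GLim a b Q f c) :
    GLim a b Q g c := by
  intro ε hε
  obtain ⟨η, hη, hh⟩ := hf ε hε
  exact ⟨η, hη, fun t ht hQ s hs => (h t ht s hs) ▸ hh t ht hQ s hs⟩

lemma glim_add (hQ : QMono Q) {f g : ℝ → ℝ → ℝ} {c c' : ℝ}
    (hf : GLim a b Q f c) (hg : GLim a b Q g c') :
    GLim a b Q (fun t s => f t s + g t s) (c + c') := by
  intro ε hε
  obtain ⟨η₁, hη₁, h₁⟩ := hf (ε/2) (by positivity)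
  obtain ⟨η₂, hη₂, h₂⟩ := hg (ε/2) (by positivity)
  refine ⟨min η₁ η₂, lt_min hη₁ hη₂, fun t ht hQt s hs => ?_⟩
  have e₁ := h₁ t ht (hQ _ _ _ (min_le_left _ _) hQt) s hs
  have e₂ := h₂ t ht (hQ _ _ _ (min_le_right _ _) hQt) s hs
  rw [abs_lt] at e₁ e₂ ⊢
  constructor <;> dsimp only <;> linarith

lemma glim_smul {f : ℝ → ℝ → ℝ} {c : ℝ} (r : ℝ) (hf : GLim a b Q f c) :
    GLim a b Q (fun t s => r * f t s) (r * c) := by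
  intro ε hε
  obtain ⟨η, hη, h⟩ := hf (ε / (|r| + 1)) (by positivity)
  refine ⟨η, hη, fun t ht hQt s hs => ?_⟩
  have e := h t ht hQt s hs
  have : |r * f t s - r * c| = |r| * |f t s - c| := by
    rw [← abs_mul]; ring_nf
  rw [this]
  calc |r| * |f t s - c| ≤ |r| * (ε / (|r| + 1)) := by
        exact mul_le_mul_of_nonneg_left (le_of_lt e) (abs_nonneg r)
    _ < (|r| + 1) * (ε / (|r| + 1)) := by
        apply mul_lt_mul_of_pos_right (by linarith) (by positivity)
    _ = ε := by field_simp

lemma glim_zero : GLim a b Q (fun _ _ => (0:ℝ)) 0 := by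
  intro ε hε
  exact ⟨1, one_pos, fun t _ _ s _ => by simpa using hε⟩

lemma glim_limit (hQ : QMono Q) (hne : QNe a b Q) {f : ℕ → ℝ → ℝ → ℝ} {g : ℝ → ℝ → ℝ}
    (hlim : ∀ k, ∃ c, GLim a b Q (f k) c)
    (hunif : ∀ ε > 0, ∃ N, ∀ k ≥ N, ∀ t ∈ Set.Ioo a b, ∀ s ∈ Jset, |f k t s - g t s| ≤ ε) :
    ∃ c, GLim a b Q g c := by
  choose cf hcf using hlim
  have hcauchy : CauchySeq cf := by
    rw [Metric.cauchySeq_iff]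
    intro ε hε
    obtain ⟨N, hN⟩ := hunif (ε/4) (by positivity)
    refine ⟨N, fun m hm n hn => ?_⟩
    obtain ⟨η₁, hη₁, h₁⟩ := hcf m (ε/4) (by positivity)
    obtain ⟨η₂, hη₂, h₂⟩ := hcf n (ε/4) (by positivity)
    obtain ⟨t, ht, hQt⟩ := hne (min η₁ η₂) (lt_min hη₁ hη₂)
    have e₁ := h₁ t ht (hQ _ _ _ (min_le_left _ _) hQt) 0 zero_mem_Jset
    have e₂ := h₂ t ht (hQ _ _ _ (min_le_right _ _) hQt) 0 zero_mem_Jset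
    have u₁ := hN m hm t ht 0 zero_mem_Jset
    have u₂ := hN n hn t ht 0 zero_mem_Jset
    rw [Real.dist_eq]
    rw [abs_lt] at e₁ e₂ ⊢
    rw [abs_le] at u₁ u₂
    constructor <;> linarith
  obtain ⟨c, hc⟩ := cauchySeq_tendsto_of_complete hcauchy
  refine ⟨c, fun ε hε => ?_⟩
  obtain ⟨N, hN⟩ := hunif (ε/4) (by positivity)
  obtain ⟨N₂, hN₂⟩ := (Metric.tendsto_atTop.mp hc) (ε/4) (by positivity)
  set k := max N N₂ with hk
  obtain ⟨η, hη, hfk⟩ := hcf k (ε/4) (by positivity)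
  refine ⟨η, hη, fun t ht hQt s hs => ?_⟩
  have e := hfk t ht hQt s hs
  have u := hN k (le_max_left _ _) t ht s hs
  have w := hN₂ k (le_max_right _ _)
  rw [Real.dist_eq] at w
  rw [abs_lt] at e w ⊢
  rw [abs_le] at u
  constructor <;> linarith

/-- Stability lemmas for `HasSidedLimits`. -/
lemma hsl_congr {f g : ℝ → ℝ → ℝ}
    (h : ∀ t ∈ Set.Ioo a b, ∀ s ∈ Jset, f t s = g t s)
    (hf : HasSidedLimits a b f) : HasSidedLimits a b g := by
  intro τ hτ
  obtain ⟨⟨c₁, hc₁⟩, ⟨c₂, hc₂⟩⟩ := hf τ hτ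
  exact ⟨⟨c₁, glim_congr h hc₁⟩, ⟨c₂, glim_congr h hc₂⟩⟩

lemma hsl_add {f g : ℝ → ℝ → ℝ} (hf : HasSidedLimits a b f) (hg : HasSidedLimits a b g) :
    HasSidedLimits a b (fun t s => f t s + g t s) := by
  intro τ hτ
  obtain ⟨⟨c₁, hc₁⟩, ⟨c₂, hc₂⟩⟩ := hf τ hτ
  obtain ⟨⟨d₁, hd₁⟩, ⟨d₂, hd₂⟩⟩ := hg τ hτ
  exact ⟨⟨c₁ + d₁, glim_add (qmono_right τ) hc₁ hd₁⟩,
    ⟨c₂ + d₂, glim_add (qmono_left τ) hc₂ hd₂⟩⟩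

lemma hsl_smul {f : ℝ → ℝ → ℝ} (r : ℝ) (hf : HasSidedLimits a b f) :
    HasSidedLimits a b (fun t s => r * f t s) := by
  intro τ hτ
  obtain ⟨⟨c₁, hc₁⟩, ⟨c₂, hc₂⟩⟩ := hf τ hτ
  exact ⟨⟨r * c₁, glim_smul r hc₁⟩, ⟨r * c₂, glim_smul r hc₂⟩⟩

lemma hsl_zero : HasSidedLimits a b (fun _ _ => (0:ℝ)) :=
  fun _ _ => ⟨⟨0, glim_zero⟩, ⟨0, glim_zero⟩⟩

lemma hsl_limit {f : ℕ → ℝ → ℝ → ℝ} {g : ℝ → ℝ → ℝ}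
    (hlim : ∀ k, HasSidedLimits a b (f k))
    (hunif : ∀ ε > 0, ∃ N, ∀ k ≥ N, ∀ t ∈ Set.Ioo a b, ∀ s ∈ Jset, |f k t s - g t s| ≤ ε) :
    HasSidedLimits a b g := by
  intro τ hτ
  constructor
  · exact glim_limit (qmono_right τ) (qne_right hτ) (fun k => (hlim k τ hτ).1) hunif
  · exact glim_limit (qmono_left τ) (qne_left hτ) (fun k => (hlim k τ hτ).2) hunif

open BoundedContinuousFunction

/-- `ℝ × ℝ` with the discrete topology, so that `X →ᵇ ℝ` is the Banach space of
all bounded functions. -/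
def X : Type := ℝ × ℝ

instance : TopologicalSpace X := ⊥
instance : DiscreteTopology X := ⟨rfl⟩

/-- Extension of a bounded function on `X` to a dynamic function. -/
def extF (e : X →ᵇ ℝ) : ℝ → ℝ → ℝ := fun t s => e (t, s)

lemma extF_add (e e' : X →ᵇ ℝ) : ∀ t s, extF (e + e') t s = extF e t s + extF e' t s := by
  intro t s; simp [extF]; rfl

lemma extF_smul (r : ℝ) (e : X →ᵇ ℝ) : ∀ t s, extF (r • e) t s = r * extF e t s := by
  intro t s; simp [extF]

lemma extF_zero : ∀ t s, extF (0 : X →ᵇ ℝ) t s = 0 := by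
  intro t s; simp [extF]; rfl

variable (a b c d : ℝ)

/-- The closed subspace of `X →ᵇ ℝ` corresponding to test functions supported in
`[c,d] × J`. -/
def S : Submodule ℝ (X →ᵇ ℝ) where
  carrier := {e | HasSidedLimits a b (extF e) ∧
    ∀ t s, (t ∉ Set.Icc c d ∨ s ∉ Jset) → extF e t s = 0}
  add_mem' := by
    rintro e e' ⟨h1, h2⟩ ⟨h1', h2'⟩
    refine ⟨hsl_congr (fun t _ s _ => (extF_add e e' t s).symm) (hsl_add h1 h1'), ?_⟩
    intro t s h
    rw [extF_add, h2 t s h, h2' t s h, add_zero]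
  zero_mem' := by
    refine ⟨hsl_congr (fun t _ s _ => (extF_zero t s).symm) hsl_zero, ?_⟩
    intro t s _; exact extF_zero t s
  smul_mem' := by
    rintro r e ⟨h1, h2⟩
    refine ⟨hsl_congr (fun t _ s _ => (extF_smul r e t s).symm) (hsl_smul r h1), ?_⟩
    intro t s h
    rw [extF_smul, h2 t s h, mul_zero]

lemma isClosed_S : IsClosed ((S a b c d : Submodule ℝ (X →ᵇ ℝ)) : Set (X →ᵇ ℝ)) := by
  apply IsSeqClosed.isClosed
  intro u e hu hue
  have hunif : ∀ ε > 0, ∃ N, ∀ k ≥ N, ∀ p : X, |u k p - e p| ≤ ε := by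
    intro ε hε
    obtain ⟨N, hN⟩ := Metric.tendsto_atTop.mp hue ε hε
    refine ⟨N, fun k hk p => ?_⟩
    have h1 : dist (u k p) (e p) ≤ dist (u k) e :=
      BoundedContinuousFunction.dist_coe_le_dist p
    have := hN k hk
    rw [Real.dist_eq] at h1
    linarith
  constructor
  · apply hsl_limit (f := fun k => extF (u k)) (fun k => (hu k).1)
    intro ε hε
    obtain ⟨N, hN⟩ := hunif ε hε
    exact ⟨N, fun k hk t _ s _ => hN k hk (t, s)⟩
  · intro t s h
    have hz : ∀ k, extF (u k) t s = 0 := fun k => (hu k).2 t s h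
    have : ∀ ε > 0, |extF e t s| ≤ ε := by
      intro ε hε
      obtain ⟨N, hN⟩ := hunif ε hε
      have h1 := hN N le_rfl (t, s)
      have h2 : (u N) (t, s) = 0 := hz N
      rw [h2] at h1
      calc |extF e t s| = |(0:ℝ) - e (t, s)| := by simp [extF]
        _ ≤ ε := h1
    by_contra hne
    have hpos : 0 < |extF e t s| := abs_pos.mpr hne
    have := this (|extF e t s| / 2) (by positivity)
    linarith

/-- The linear map extending a bounded function to a dynamic function. -/
def extLin : (X →ᵇ ℝ) →ₗ[ℝ] (ℝ → ℝ → ℝ) where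
  toFun := extF
  map_add' e e' := by funext t s; exact extF_add e e' t s
  map_smul' r e := by funext t s; exact extF_smul r e t s

lemma isDynTest_extF (hac : a < c) (hcd : c ≤ d) (hdb : d < b)
    (e : X →ᵇ ℝ) (he : e ∈ S a b c d) : IsDynTest a b (extF e) := by
  refine ⟨⟨‖e‖, fun t _ s _ => ?_⟩, he.1, c, d, hac, hcd, hdb, fun t ht s hs => ?_⟩
  · exact BoundedContinuousFunction.norm_coe_le_norm e (t, s)
  · exact he.2 t s (Or.inl ht)

lemma sub_bs {E : Type} [NormedAddCommGroup E] [NormedSpace ℝ E] (p : Submodule ℝ E)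
    [CompleteSpace p] (g : ℕ → p →L[ℝ] ℝ) (h : ∀ x, ∃ C, ∀ n, ‖g n x‖ ≤ C) :
    ∃ C, ∀ n (x : p), ‖g n x‖ ≤ C * ‖(x : E)‖ := by
  obtain ⟨C', hC'⟩ := banach_steinhaus h
  refine ⟨C', fun n x => le_trans ((g n).le_of_opNorm_le (hC' n) x) ?_⟩
  rw [Submodule.norm_coe]

lemma F_eq_zero (a b c d : ℝ) (hac : a < c) (hcd : c ≤ d) (hdb : d < b)
    (F : (ℝ → ℝ → ℝ) →ₗ[ℝ] ℝ) (hF : SeqContT a b F)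
    (δ : ℝ → ℝ → ℝ) (hδ : ∀ t, ∀ s ∈ Jset, δ t s = 0) : F δ = 0 := by
  have hzero : IsDynTest a b (fun _ _ => (0:ℝ)) :=
    ⟨⟨0, fun t _ s _ => by simp⟩, hsl_zero, c, d, hac, hcd, hdb, fun t _ s _ => rfl⟩
  have hδtest : IsDynTest a b δ := by
    refine ⟨⟨0, fun t _ s hs => by rw [hδ t s hs]; simp⟩, ?_, c, d, hac, hcd, hdb,
      fun t _ s hs => hδ t s hs⟩
    exact hsl_congr (fun t _ s hs => (hδ t s hs).symm) hsl_zero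
  have hT : TendstoT a b (fun _ => δ) (fun _ _ => 0) :=
    ⟨⟨c, d, hac, hcd, hdb, fun _ t _ s hs => hδ t s hs⟩,
     fun ε hε => ⟨0, fun n _ t _ s hs => by
        show |δ t s - 0| < ε
        rw [hδ t s hs]; simpa using hε⟩⟩
  have hten := hF (fun _ => δ) (fun _ _ => 0) (fun _ => hδtest) hzero hT
  have h0 : F (fun _ _ => (0:ℝ)) = 0 := by
    have h : (fun (_ : ℝ) (_ : ℝ) => (0:ℝ)) = (0 : ℝ → ℝ → ℝ) := rfl
    rw [h, map_zero]
  rw [h0] at hten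
  exact tendsto_nhds_unique tendsto_const_nhds hten

end Stmt8

open Stmt8 BoundedContinuousFunction

set_option maxHeartbeats 4000000 in
set_option synthInstance.maxHeartbeats 1000000 in
/-- if linear `𝒯`-sequentially continuous functionals `Fₙ` converge
pointwise on dynamic test functions, then `Fₙ(φₙ) → 0` whenever `φₙ → 0` in `𝒯`. -/
theorem stmt_8 (a b : ℝ) (F : ℕ → (ℝ → ℝ → ℝ) →ₗ[ℝ] ℝ)
    (hcont : ∀ n, SeqContT a b (F n))
    (hconv : ∀ φ, IsDynTest a b φ →
      ∃ L, Filter.Tendsto (fun n => F n φ) Filter.atTop (nhds L))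
    (φn : ℕ → ℝ → ℝ → ℝ) (hφn : ∀ n, IsDynTest a b (φn n))
    (h0 : TendstoT a b φn (fun _ _ => 0)) :
    Filter.Tendsto (fun n => F n (φn n)) Filter.atTop (nhds 0) := by
  classical
  obtain ⟨⟨c, d, hac, hcd, hdb, hsupp⟩, hunif⟩ := h0
  haveI : CompleteSpace (S a b c d) := (isClosed_S a b c d).completeSpace_coe
  -- continuity of the induced functionals on the Banach space `S a b c d`
  have hGcont : ∀ n, Continuous ((F n).comp (extLin.comp (S a b c d).subtype)) := by
    intro n
    rw [continuous_iff_seqContinuous]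
    intro u x hux
    have hvx : Filter.Tendsto (fun k => ((u k : X →ᵇ ℝ))) Filter.atTop (nhds (x : X →ᵇ ℝ)) :=
      ((continuous_subtype_val.tendsto x).comp hux)
    have key := hcont n (fun k => extF ((u k : X →ᵇ ℝ))) (extF (x : X →ᵇ ℝ))
      (fun k => isDynTest_extF a b c d hac hcd hdb _ (u k).2)
      (isDynTest_extF a b c d hac hcd hdb _ x.2) ?_
    · exact key
    · constructor
      · exact ⟨c, d, hac, hcd, hdb, fun k t ht s hs => (u k).2.2 t s (Or.inl ht)⟩
      · intro ε hε
        obtain ⟨N, hN⟩ := Metric.tendsto_atTop.mp hvx ε hε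
        refine ⟨N, fun k hk t _ s _ => ?_⟩
        have h1 : dist ((u k : X →ᵇ ℝ) (t, s)) ((x : X →ᵇ ℝ) (t, s))
            ≤ dist ((u k : X →ᵇ ℝ)) ((x : X →ᵇ ℝ)) :=
          BoundedContinuousFunction.dist_coe_le_dist (α := X) (β := ℝ) (f := (u k : X →ᵇ ℝ)) (g := (x : X →ᵇ ℝ)) ((t, s) : X)
        have h2 := hN k hk
        rw [Real.dist_eq] at h1
        calc |extF ((u k : X →ᵇ ℝ)) t s - extF (x : X →ᵇ ℝ) t s|
            ≤ dist ((u k : X →ᵇ ℝ)) ((x : X →ᵇ ℝ)) := h1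
          _ < ε := h2
  set G : ℕ → (S a b c d) →L[ℝ] ℝ :=
    fun n => ⟨(F n).comp (extLin.comp (S a b c d).subtype), hGcont n⟩ with hG
  have hpt : ∀ x : S a b c d, ∃ C, ∀ n, ‖G n x‖ ≤ C := by
    intro x
    obtain ⟨L, hL⟩ := hconv (extF (x : X →ᵇ ℝ)) (isDynTest_extF a b c d hac hcd hdb _ x.2)
    obtain ⟨C, hC⟩ := hL.norm.bddAbove_range
    exact ⟨C, fun n => hC ⟨n, rfl⟩⟩
  obtain ⟨C', hC'⟩ := sub_bs (S a b c d) G hpt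
  -- the zero-extensions of the φn as elements of S
  have hen : ∀ n, ∃ e : S a b c d,
      (∀ t ∈ Set.Ioo a b, ∀ s ∈ Jset, extF (e : X →ᵇ ℝ) t s = φn n t s) ∧
      (∀ t s, (t ∉ Set.Ioo a b ∨ s ∉ Jset) → extF (e : X →ᵇ ℝ) t s = 0) := by
    intro n
    obtain ⟨M, hM⟩ := (hφn n).1
    set f : X → ℝ :=
      fun p => if p.1 ∈ Set.Icc c d ∧ p.1 ∈ Set.Ioo a b ∧ p.2 ∈ Jset
        then φn n p.1 p.2 else 0 with hf
    have hfb : ∀ p : X, ‖f p‖ ≤ max M 0 := by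
      intro p; rw [hf]; dsimp only
      split_ifs with h
      · rw [Real.norm_eq_abs]
        exact le_max_of_le_left (hM p.1 h.2.1 p.2 h.2.2)
      · simp
    set e₀ : X →ᵇ ℝ := BoundedContinuousFunction.ofNormedAddCommGroup f
      continuous_of_discreteTopology (max M 0) hfb with he₀
    have heq : ∀ t ∈ Set.Ioo a b, ∀ s ∈ Jset, extF e₀ t s = φn n t s := by
      intro t ht s hs
      show f (t, s) = φn n t s
      rw [hf]; dsimp only
      by_cases hI : t ∈ Set.Icc c d
      · rw [if_pos ⟨hI, ht, hs⟩]
      · rw [if_neg (by tauto), hsupp n t hI s hs]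
    have hvan : ∀ t s, (t ∉ Set.Ioo a b ∨ s ∉ Jset) → extF e₀ t s = 0 := by
      intro t s h
      show f (t, s) = 0
      rw [hf]; dsimp only
      rw [if_neg (by tauto)]
    have hmem : e₀ ∈ S a b c d := by
      refine ⟨hsl_congr (fun t ht s hs => (heq t ht s hs).symm) (hφn n).2.1, ?_⟩
      intro t s h
      show f (t, s) = 0
      rw [hf]; dsimp only
      rw [if_neg (by tauto)]
    exact ⟨⟨e₀, hmem⟩, heq, hvan⟩
  choose en hen1 hen2 using hen
  -- the norms of the en tend to zero
  have hnorm : ∀ n, ∀ ε > (0:ℝ), (∀ t ∈ Set.Ioo a b, ∀ s ∈ Jset, |φn n t s| ≤ ε) →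
      ‖(en n : X →ᵇ ℝ)‖ ≤ ε := by
    intro n ε hε h
    rw [BoundedContinuousFunction.norm_le hε.le]
    intro p
    by_cases hp : p.1 ∈ Set.Ioo a b ∧ p.2 ∈ Jset
    · have h1 : (en n : X →ᵇ ℝ) (p.1, p.2) = φn n p.1 p.2 := hen1 n p.1 hp.1 p.2 hp.2
      have h2 : (en n : X →ᵇ ℝ) p = (en n : X →ᵇ ℝ) (p.1, p.2) := rfl
      rw [h2, h1, Real.norm_eq_abs]
      exact h p.1 hp.1 p.2 hp.2
    · have h1 : (en n : X →ᵇ ℝ) (p.1, p.2) = 0 := hen2 n p.1 p.2 (by tauto)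
      have h2 : (en n : X →ᵇ ℝ) p = (en n : X →ᵇ ℝ) (p.1, p.2) := rfl
      rw [h2, h1]
      simpa using hε.le
  have hten : Filter.Tendsto (fun n => ‖(en n : X →ᵇ ℝ)‖) Filter.atTop (nhds 0) := by
    rw [Metric.tendsto_atTop]
    intro ε hε
    obtain ⟨N, hN⟩ := hunif (ε/2) (by positivity)
    refine ⟨N, fun n hn => ?_⟩
    have hb : ‖(en n : X →ᵇ ℝ)‖ ≤ ε/2 := by
      refine hnorm n (ε/2) (by positivity) (fun t ht s hs => ?_)
      have := hN n hn t ht s hs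
      rw [sub_zero] at this
      exact this.le
    rw [Real.dist_eq, sub_zero, abs_of_nonneg (norm_nonneg _)]
    linarith
  -- F n (φn n) = G n (en n)
  have hkey : ∀ n, F n (φn n) = G n (en n) := by
    intro n
    have hδ : ∀ t, ∀ s ∈ Jset, (φn n - extF (en n : X →ᵇ ℝ)) t s = 0 := by
      intro t s hs
      show φn n t s - extF (en n : X →ᵇ ℝ) t s = 0
      by_cases ht : t ∈ Set.Ioo a b
      · rw [hen1 n t ht s hs]; ring
      · have h1 : φn n t s = 0 :=
          hsupp n t (fun hI => ht ⟨lt_of_lt_of_le hac hI.1, lt_of_le_of_lt hI.2 hdb⟩) s hs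
        rw [h1, hen2 n t s (Or.inl ht)]; ring
    have hz := F_eq_zero a b c d hac hcd hdb (F n) (hcont n) _ hδ
    have h2 : F n (φn n) - F n (extF (en n : X →ᵇ ℝ)) = 0 := by
      rw [← map_sub]; exact hz
    have h3 : G n (en n) = F n (extF (en n : X →ᵇ ℝ)) := rfl
    linarith
  -- conclude
  apply squeeze_zero_norm (a := fun n => C' * ‖(en n : X →ᵇ ℝ)‖)
  · intro n
    show ‖F n (φn n)‖ ≤ C' * ‖(en n : X →ᵇ ℝ)‖
    rw [hkey n]
    exact hC' n (en n)
  · simpa using tendsto_const_nhds.mul hten
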